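/- Fix p ∈ [n] and let U_p be the set of connectors (x,y) of S(n,k) with x_{p,p+1,p+2} = 1,0,0 (position p+2 unmatched in x) and σ^{−1}(y)_{p,p+1,p+2} = 0,1,0 (position p unmatched in σ^{−1}(y)). Then the connectors in U_p are pairwise disjoint: for any two distinct connectors (x,y), (x',y') ∈ U_p, the sets {x,y} and {x',y'} are disjoint. -/
import Mathlib


/-- Cyclic right shift of a bitstring of length `n` by one position: `σ(x)_i = x_{i-1}`. -/
def shift {n : ℕ} (x : ZMod n → Bool) : ZMod n → Bool := fun i => x (i - 1)

/-- Cyclic left shift, i.e. `σ⁻¹`: `σ⁻¹(x)_i = x_{i+1}`. -/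
def unshift {n : ℕ} (x : ZMod n → Bool) : ZMod n → Bool := fun i => x (i + 1)

/-- A vertex of the Schrijver graph `S(n,k)` in bitstring form: a binary string of length `n`
with exactly `k` ones and no two ones cyclically adjacent. -/
def IsSchrijverVertex (n k : ℕ) (x : ZMod n → Bool) : Prop :=
  Set.ncard {i : ZMod n | x i = true} = k ∧ ∀ i : ZMod n, x i = true → x (i + 1) = false

/-- Adjacency in the (Schrijver/Kneser) graph: the sets of 1-positions are disjoint
(and the strings are distinct). -/
def SAdj {n : ℕ} (x y : ZMod n → Bool) : Prop :=
  x ≠ y ∧ ∀ i : ZMod n, ¬(x i = true ∧ y i = true)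

/-- The necklace of `x`: the set of all cyclic shifts of `x`. -/
def neck {n : ℕ} (x : ZMod n → Bool) : Set (ZMod n → Bool) :=
  {y | ∃ i : ℕ, shift^[i] x = y}

/-- `(x, y)` is a connector with the glider push at position `i`: `x` and `σ⁻¹(y)` agree
outside the three cyclically consecutive positions `i, i+1, i+2`, where `x` reads `1,0,–`
(with `i+2` unmatched in `x`) and `σ⁻¹(y)` reads `–,1,0` (with `i` unmatched in `σ⁻¹(y)`). -/
def ConnAt {n : ℕ} (i : ZMod n) (x y : ZMod n → Bool) : Prop :=
  x i = true ∧ x (i + 1) = false ∧ x (i + 2) = false ∧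
  unshift y i = false ∧ unshift y (i - 1) = false ∧
  unshift y (i + 1) = true ∧ unshift y (i + 2) = false ∧
  ∀ j : ZMod n, j ≠ i → j ≠ i + 1 → j ≠ i + 2 → x j = unshift y j

/-- `(x,y)` is a connector (at some position). -/
def Conn {n : ℕ} (x y : ZMod n → Bool) : Prop := ∃ i : ZMod n, ConnAt i x y

/-- the connectors in `U_p` (connectors with the glider push at the fixed
position `p`) are pairwise disjoint: two distinct connectors `(x,y), (x',y') ∈ U_p`
satisfy `{x,y} ∩ {x',y'} = ∅`. -/
theorem connectors_pairwise_disjoint (n k : ℕ) (hk : 1 ≤ k) (hn : 2 * k + 1 ≤ n)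
    (p : ZMod n) (x y x' y' : ZMod n → Bool)
    (hx : IsSchrijverVertex n k x) (hy : IsSchrijverVertex n k y)
    (hx' : IsSchrijverVertex n k x') (hy' : IsSchrijverVertex n k y')
    (hc : ConnAt p x y) (hc' : ConnAt p x' y')
    (hne : (x, y) ≠ (x', y')) :
    x ≠ x' ∧ x ≠ y' ∧ y ≠ x' ∧ y ≠ y' := by
  obtain ⟨hx1, hx2, hx3, hy0, hym, hy1, hy2, hagree⟩ := hc
  obtain ⟨hx1', hx2', hx3', hy0', hym', hy1', hy2', hagree'⟩ := hc'
  have hyp : y p = false := by simpa [unshift, sub_add_cancel] using hym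
  have hyp' : y' p = false := by simpa [unshift, sub_add_cancel] using hym'
  have hxy' : x ≠ y' := by
    intro h; rw [← h] at hyp'; rw [hx1] at hyp'; exact Bool.noConfusion hyp'
  have hyx' : y ≠ x' := by
    intro h; rw [h] at hyp; rw [hx1'] at hyp; exact Bool.noConfusion hyp
  have hdet : x = x' → y = y' := by
    intro h
    funext j
    have e : y j = unshift y (j - 1) := by simp [unshift, sub_add_cancel]
    have e' : y' j = unshift y' (j - 1) := by simp [unshift, sub_add_cancel]
    rw [e, e']
    by_cases h0 : j - 1 = p
    · rw [h0, hy0, hy0']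
    by_cases h1 : j - 1 = p + 1
    · rw [h1, hy1, hy1']
    by_cases h2 : j - 1 = p + 2
    · rw [h2, hy2, hy2']
    · rw [← hagree _ h0 h1 h2, ← hagree' _ h0 h1 h2, h]
  have hdet2 : y = y' → x = x' := by
    intro h
    funext j
    by_cases h0 : j = p
    · rw [h0, hx1, hx1']
    by_cases h1 : j = p + 1
    · rw [h1, hx2, hx2']
    by_cases h2 : j = p + 2
    · rw [h2, hx3, hx3']
    · rw [hagree _ h0 h1 h2, hagree' _ h0 h1 h2, h]
  have hxx : x ≠ x' := fun h => hne (by rw [h, hdet h])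
  have hyy : y ≠ y' := fun h => hne (by rw [h, hdet2 h])
  exact ⟨hxx, hxy', hyx', hyy⟩
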